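/- Let K be a number field of degree d over ℚ, and let L be a finite extension of K of degree n ≥ 2 (inside a fixed algebraic closure of K) such that L/K has no proper subextensions, i.e., there is no intermediate field M with K ⊊ M ⊊ L. Then there exists a constant c > 0, depending only on n and d, such that every nonzero x ∈ 𝓞_L with Tr^L_K(x) = 0 satisfies house(x) ≥ c · Δ_{L/K}^{1/(n(n−1)d)}. -/

import Mathlib

open NumberField Module

/-- `Δ_{L/K}`: the absolute norm of the relative discriminant of `L/K`, computed as the
absolute norm of the different ideal of `𝓞_L` over `𝓞_K` (and junk value `0` if `L/K` is
not finite). -/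
noncomputable def relDiscNorm (K : Type*) [Field K] [NumberField K]
    {Kbar : Type*} [Field Kbar] [Algebra K Kbar]
    (L : IntermediateField K Kbar) : ℕ := by
  classical
  exact if h : FiniteDimensional K L then
    haveI : CharZero L := charZero_of_injective_algebraMap (algebraMap K L).injective
    haveI : FiniteDimensional ℚ L := Module.Finite.trans (R := ℚ) K L
    haveI : NumberField L :=
      { to_charZero := inferInstance, to_finiteDimensional := inferInstance }
    Ideal.absNorm (differentIdeal (𝓞 K) (𝓞 L))
  else 0

/-- The house of an algebraic integer: the largest complex absolute value of the roots of
its minimal polynomial over `ℤ`. -/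
noncomputable def house' {F : Type*} [Field F] (x : F) : ℝ :=
  sSup ((fun z : ℂ => ‖z‖) '' ((minpoly ℤ x).rootSet ℂ))

/-- if `L/K` is an extension of degree `n ≥ 2` of a number field `K` of
degree `d` with no proper subextensions, then every nonzero trace-zero integer `x` of `L`
satisfies `house(x) ≥ c · Δ_{L/K}^{1/(n(n-1)d)}`, with `c > 0` depending only on `n`
and `d`. -/
private lemma multiset_prod_le_pow {s : Multiset ℝ} {B : ℝ} (hB : 0 ≤ B)
    (h : ∀ a ∈ s, 0 ≤ a ∧ a ≤ B) : s.prod ≤ B ^ Multiset.card s := by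
  induction s using Multiset.induction_on with
  | empty => simp
  | cons a t ih =>
    have ha := h a (Multiset.mem_cons_self a t)
    have ht : ∀ b ∈ t, 0 ≤ b ∧ b ≤ B := fun b hb => h b (Multiset.mem_cons_of_mem hb)
    have h0 : 0 ≤ t.prod := Multiset.prod_nonneg (fun b hb => (ht b hb).1)
    simp only [Multiset.prod_cons, Multiset.card_cons, pow_succ']
    exact mul_le_mul ha.2 (ih ht) h0 hB

theorem house_ge_of_traceZero_integer (n d : ℕ) (hn : 2 ≤ n) :
    ∃ c : ℝ, 0 < c ∧
      ∀ (K : Type) [Field K] [NumberField K]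
        (Kbar : Type) [Field Kbar] [Algebra K Kbar] [IsAlgClosure K Kbar],
        finrank ℚ K = d →
        ∀ L : IntermediateField K Kbar, finrank K L = n →
          (∀ M : IntermediateField K L, M = ⊥ ∨ M = ⊤) →
          ∀ x : L, x ≠ 0 → IsIntegral ℤ x → Algebra.trace K L x = 0 →
            c * (relDiscNorm K L : ℝ) ^
                ((1 : ℝ) / ((n : ℝ) * ((n : ℝ) - 1) * (d : ℝ))) ≤
              house' x := by
  classical
  refine ⟨1/2, by norm_num, ?_⟩
  intro K _ _ Kbar _ _ _ hd L hL hsimple x hx0 hxint htr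
  haveI hfin : FiniteDimensional K L :=
    FiniteDimensional.of_finrank_pos (by omega)
  haveI : CharZero L := charZero_of_injective_algebraMap (algebraMap K L).injective
  haveI : FiniteDimensional ℚ L := Module.Finite.trans (R := ℚ) K L
  haveI : NumberField L :=
    { to_charZero := inferInstance, to_finiteDimensional := inferInstance }
  have hd1 : 0 < d := hd ▸ Module.finrank_pos
  -- x generates L over K
  have hxint' : IsIntegral K x := IsIntegral.of_finite K x
  have hadj : IntermediateField.adjoin K {x} = ⊤ := by
    rcases hsimple (IntermediateField.adjoin K {x}) with h | h
    · exfalso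
      have hxmem : x ∈ IntermediateField.adjoin K {x} :=
        IntermediateField.mem_adjoin_simple_self K x
      rw [h, IntermediateField.mem_bot] at hxmem
      obtain ⟨k, hk⟩ := hxmem
      rw [← hk, Algebra.trace_algebraMap] at htr
      have : (finrank K L : K) * k = 0 := by rwa [nsmul_eq_mul] at htr
      have hk0 : k = 0 := by
        have hne : (finrank K L : K) ≠ 0 :=
          Nat.cast_ne_zero.mpr (by rw [hL]; omega)
        rcases mul_eq_zero.mp this with h' | h'
        · exact absurd h' hne
        · exact h'
      exact hx0 (by rw [← hk, hk0, map_zero])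
    · exact h
  have hadj' : Algebra.adjoin K {x} = ⊤ := by
    have := IntermediateField.adjoin_simple_toSubalgebra_of_isAlgebraic hxint'.isAlgebraic
    rw [hadj] at this
    rw [← this, IntermediateField.top_toSubalgebra]
  -- the integral element and the derivative of its minimal polynomial
  set X : 𝓞 L := ⟨x, hxint⟩ with hX
  have hXx : algebraMap (𝓞 L) L X = x := rfl
  have hXint : IsIntegral (𝓞 K) X := IsIntegralClosure.isIntegral (𝓞 K) L X
  set y : 𝓞 L := Polynomial.aeval X (Polynomial.derivative (minpoly (𝓞 K) X)) with hy
  have hmem : y ∈ differentIdeal (𝓞 K) (𝓞 L) :=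
    aeval_derivative_mem_differentIdeal (𝓞 K) K L X (by rw [hXx, hadj'])
  set yL : L := Polynomial.aeval x (Polynomial.derivative (minpoly K x)) with hyLdef
  have hminp : minpoly K x = (minpoly (𝓞 K) X).map (algebraMap (𝓞 K) K) :=
    minpoly.isIntegrallyClosed_eq_field_fractions K L hXint
  have hyL : algebraMap (𝓞 L) L y = yL := by
    rw [hyLdef, hminp, Polynomial.derivative_map, Polynomial.aeval_map_algebraMap,
      ← hXx, Polynomial.aeval_algebraMap_apply]
  have hyL0 : yL ≠ 0 :=
    (Algebra.IsSeparable.isSeparable K x).aeval_derivative_ne_zero (minpoly.aeval K x)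
  -- norm and divisibility
  set N : ℤ := Algebra.norm ℤ y with hN
  set q : ℚ := Algebra.norm ℚ yL with hq
  have hNq : (N : ℚ) = q := by
    rw [hN, hq, ← hyL]
    exact Algebra.coe_norm_int y
  have hq0 : q ≠ 0 := by
    rw [hq, Algebra.norm_ne_zero_iff]
    exact hyL0
  have hN0 : N.natAbs ≠ 0 := by
    intro h
    apply hq0
    rw [← hNq, Int.natAbs_eq_zero.mp h, Int.cast_zero]
  have hrel : relDiscNorm K L = Ideal.absNorm (differentIdeal (𝓞 K) (𝓞 L)) := by
    rw [relDiscNorm]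
    exact dif_pos hfin
  have hdvd : relDiscNorm K L ∣ N.natAbs := by
    rw [hrel, hN, ← Ideal.absNorm_span_singleton]
    exact Ideal.absNorm_dvd_absNorm_of_le
      ((Ideal.span_singleton_le_iff_mem _).mpr hmem)
  have hle : relDiscNorm K L ≤ N.natAbs := Nat.le_of_dvd (Nat.pos_of_ne_zero hN0) hdvd
  -- house bounds
  set H : ℝ := house' x with hH
  have hbdd : BddAbove ((fun z : ℂ => ‖z‖) '' ((minpoly ℤ x).rootSet ℂ)) :=
    (((minpoly ℤ x).rootSet ℂ).toFinite.image _).bddAbove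
  have hroot_le : ∀ r : ℂ, r ∈ (minpoly ℤ x).rootSet ℂ → ‖r‖ ≤ H :=
    fun r hr => le_csSup hbdd ⟨r, hr, rfl⟩
  have hH0 : 0 ≤ H :=
    Real.sSup_nonneg (by rintro _ ⟨z, _, rfl⟩; exact norm_nonneg z)
  -- per-embedding bound
  have key : ∀ τ : L →ₐ[ℚ] ℂ, ‖τ yL‖ ≤ (2 * H) ^ (n - 1) := by
    intro τ
    set ρ : K →+* ℂ := (τ.toRingHom).comp (algebraMap K L) with hρ
    set f : Polynomial K := minpoly K x with hf
    set F : Polynomial ℂ := f.map ρ with hF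
    have hfmonic : f.Monic := minpoly.monic hxint'
    have hFmonic : F.Monic := hfmonic.map ρ
    have hdeg : F.natDegree = n := by
      rw [hF, hfmonic.natDegree_map, hf, ← IntermediateField.adjoin.finrank hxint', hadj,
        IntermediateField.finrank_top', hL]
    have hcomm : ∀ p : Polynomial K, (p.map ρ).eval (τ x) = τ (Polynomial.aeval x p) := by
      intro p
      have h := Polynomial.hom_eval₂ p (algebraMap K L) (τ : L →+* ℂ) x
      rw [Polynomial.eval_map, Polynomial.aeval_def, hρ]
      exact h.symm
    have hFτx : F.IsRoot (τ x) := by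
      show F.eval (τ x) = 0
      rw [hF, hcomm, hf, minpoly.aeval, map_zero]
    have hτyL : ‖τ yL‖ = ‖(Polynomial.derivative F).eval (τ x)‖ := by
      rw [hyLdef, hF, Polynomial.derivative_map, hcomm]
    obtain ⟨G, hFG⟩ := Polynomial.dvd_iff_isRoot.mpr hFτx
    have hGmonic : G.Monic :=
      (Polynomial.monic_X_sub_C (τ x)).of_mul_monic_left (hFG ▸ hFmonic)
    have hevalG : (Polynomial.derivative F).eval (τ x) = G.eval (τ x) := by
      rw [hFG]
      simp [Polynomial.derivative_mul]
    have hFdvdQ : F ∣ (minpoly ℤ x).map (algebraMap ℤ ℂ) := by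
      have h1 : f ∣ (minpoly ℚ x).map (algebraMap ℚ K) :=
        minpoly.dvd_map_of_isScalarTower ℚ K x
      have h2 : F ∣ ((minpoly ℚ x).map (algebraMap ℚ K)).map ρ := Polynomial.map_dvd ρ h1
      rw [Polynomial.map_map] at h2
      have h3 : ρ.comp (algebraMap ℚ K) = algebraMap ℚ ℂ := Subsingleton.elim _ _
      rw [h3] at h2
      have h4 : minpoly ℚ x = (minpoly ℤ x).map (algebraMap ℤ ℚ) :=
        minpoly.isIntegrallyClosed_eq_field_fractions' ℚ hxint
      rw [h4, Polynomial.map_map] at h2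
      have h5 : (algebraMap ℚ ℂ).comp (algebraMap ℤ ℚ) = algebraMap ℤ ℂ :=
        Subsingleton.elim _ _
      rwa [h5] at h2
    have hQ0 : (minpoly ℤ x).map (algebraMap ℤ ℂ) ≠ 0 := by
      rw [Polynomial.map_ne_zero_iff (by exact_mod_cast Int.cast_injective)]
      exact minpoly.ne_zero hxint
    have hrootsF : ∀ r ∈ F.roots, ‖r‖ ≤ H := by
      intro r hr
      apply hroot_le
      rw [Polynomial.mem_rootSet']
      refine ⟨hQ0, ?_⟩
      have hr0 : F.eval r = 0 := Polynomial.isRoot_of_mem_roots hr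
      have h5 := Polynomial.eval_eq_zero_of_dvd_of_eval_eq_zero hFdvdQ hr0
      rwa [Polynomial.aeval_def, ← Polynomial.eval_map]
    have hτxH : ‖τ x‖ ≤ H :=
      hrootsF _ (Polynomial.mem_roots'.mpr ⟨hFmonic.ne_zero, hFτx⟩)
    have hGdvd : G ∣ F := Dvd.intro_left _ hFG.symm
    have hGroots : G.roots ≤ F.roots := Polynomial.roots.le_of_dvd hFmonic.ne_zero hGdvd
    have hGsplits : G = (G.roots.map fun a => Polynomial.X - Polynomial.C a).prod :=
      (IsAlgClosed.splits G).eq_prod_roots_of_monic hGmonic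
    have hGcard : Multiset.card G.roots = n - 1 := by
      have h6 : F.natDegree = 1 + G.natDegree := by
        rw [hFG, Polynomial.natDegree_mul (Polynomial.X_sub_C_ne_zero _) hGmonic.ne_zero,
          Polynomial.natDegree_X_sub_C]
      have h7 := Polynomial.Splits.natDegree_eq_card_roots
        (IsAlgClosed.splits G)
      omega
    have hGeval : ‖G.eval (τ x)‖ ≤ (2 * H) ^ (n - 1) := by
      have heq : ‖G.eval (τ x)‖ =
          ((G.roots.map fun a => ‖τ x - a‖)).prod := by
        conv_lhs => rw [hGsplits, Polynomial.eval_multiset_prod]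
        rw [show ∀ z : ℂ, ‖z‖ = normHom z from fun _ => rfl, map_multiset_prod, Multiset.map_map, Multiset.map_map]
        simp [Function.comp]
      rw [heq]
      have hcard2 : Multiset.card (G.roots.map fun a => ‖τ x - a‖) = n - 1 := by
        rw [Multiset.card_map, hGcard]
      calc ((G.roots.map fun a => ‖τ x - a‖)).prod
          ≤ (2 * H) ^ Multiset.card (G.roots.map fun a => ‖τ x - a‖) := by
            apply multiset_prod_le_pow (by linarith)
            rintro b hb
            obtain ⟨a, ha, rfl⟩ := Multiset.mem_map.mp hb
            refine ⟨norm_nonneg _, ?_⟩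
            have h8 : ‖a‖ ≤ H := hrootsF a (Multiset.mem_of_le hGroots ha)
            have h9 : ‖τ x - a‖ ≤ ‖τ x‖ + ‖a‖ := by
              exact norm_sub_le _ _
            linarith
        _ = (2 * H) ^ (n - 1) := by rw [hcard2]
    rw [hτyL, hevalG]
    exact hGeval
  -- product over all embeddings
  have hcardemb : Fintype.card (L →ₐ[ℚ] ℂ) = d * n := by
    rw [AlgHom.card ℚ L ℂ, ← finrank_mul_finrank ℚ K L, hd, hL]
  have hprod : |(q : ℝ)| ≤ (2 * H) ^ ((n - 1) * (d * n)) := by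
    have hemb : (algebraMap ℚ ℂ) q = ∏ τ : L →ₐ[ℚ] ℂ, τ yL :=
      Algebra.norm_eq_prod_embeddings ℚ ℂ yL
    have habs : |(q : ℝ)| = ‖∏ τ : L →ₐ[ℚ] ℂ, τ yL‖ := by
      rw [← hemb, eq_ratCast, show ((q : ℂ)) = (((q : ℝ) : ℂ)) by push_cast; ring,
        Complex.norm_real, Real.norm_eq_abs]
    rw [habs, norm_prod]
    calc ∏ τ : L →ₐ[ℚ] ℂ, ‖τ yL‖
        ≤ ∏ _τ : L →ₐ[ℚ] ℂ, (2 * H) ^ (n - 1) :=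
          Finset.prod_le_prod (fun τ _ => norm_nonneg _) (fun τ _ => key τ)
      _ = ((2 * H) ^ (n - 1)) ^ (d * n) := by
          rw [Finset.prod_const, Finset.card_univ, hcardemb]
      _ = (2 * H) ^ ((n - 1) * (d * n)) := by rw [← pow_mul]
  have hmain : (relDiscNorm K L : ℝ) ≤ (2 * H) ^ ((n - 1) * (d * n)) := by
    calc (relDiscNorm K L : ℝ) ≤ (N.natAbs : ℝ) := Nat.cast_le.mpr hle
      _ = |(N : ℝ)| := by push_cast [Nat.cast_natAbs]; ring
      _ = |(q : ℝ)| := by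
          have : ((N : ℝ)) = ((q : ℝ)) := by exact_mod_cast congrArg (fun t : ℚ => (t : ℝ)) hNq
          rw [this]
      _ ≤ _ := hprod
  set m : ℕ := (n - 1) * (d * n) with hm
  set e : ℝ := (n : ℝ) * ((n : ℝ) - 1) * (d : ℝ) with he
  have hme : (m : ℝ) = e := by
    rw [hm, he]
    push_cast [Nat.cast_sub (by omega : 1 ≤ n)]
    ring
  have hm0 : 0 < m := Nat.mul_pos (by omega) (Nat.mul_pos hd1 (by omega))
  have he0 : 0 < e := by
    rw [← hme]
    exact_mod_cast hm0
  have h2H : (relDiscNorm K L : ℝ) ^ ((1 : ℝ) / e) ≤ 2 * H := by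
    calc (relDiscNorm K L : ℝ) ^ ((1 : ℝ) / e)
        ≤ ((2 * H) ^ m) ^ ((1 : ℝ) / e) :=
          Real.rpow_le_rpow (Nat.cast_nonneg _) hmain (by positivity)
      _ = (2 * H) ^ ((m : ℝ) * (1 / e)) := by
          rw [← Real.rpow_natCast (2 * H) m, ← Real.rpow_mul (by linarith)]
      _ = (2 * H) ^ (1 : ℝ) := by
          rw [hme]
          congr 1
          field_simp
      _ = 2 * H := Real.rpow_one _
  calc 1 / 2 * (relDiscNorm K L : ℝ) ^ ((1 : ℝ) / e) ≤ 1 / 2 * (2 * H) :=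
        mul_le_mul_of_nonneg_left h2H (by norm_num)
    _ = H := by ring
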